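/- For any ω ∈ Q_1^-Λ^k on the cube T = [−1,1]^n and any μ ∈ Q_1^{*,-}Λ^{k+1}, the adjoint projection I_T^{d^k} ω onto Whitney forms satisfies ⟨d^k I_T^{d^k} ω, μ⟩_{L^2Λ^{k+1}(T)} − ⟨I_T^{d^k} ω, δ_{k+1} μ⟩_{L^2Λ^k(T)} = ⟨d^k ω, μ⟩_{L^2Λ^{k+1}(T)} − ⟨ω, δ_{k+1} μ⟩_{L^2Λ^k(T)}; that is, the defining adjoint identity of I_T^{d^k} (stated for test forms in P_1^{*,-}Λ^{k+1}) extends to all test forms in the larger space Q_1^{*,-}Λ^{k+1}. -/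

import Mathlib

open MvPolynomial Finset MeasureTheory

/-- Strictly increasing `k`-indices in `{1,…,n}`, modelled as `k`-element subsets of `Fin n`. -/
abbrev Idx (n k : ℕ) := {s : Finset (Fin n) // s.card = k}

/-- A differential `k`-form with polynomial coefficients on `ℝⁿ`:
one polynomial coefficient for each increasing `k`-index. -/
abbrev Form (n k : ℕ) := Idx n k → MvPolynomial (Fin n) ℝ

/-- The sign `(-1)^{#\{j ∈ s : j < i\}}`. -/
noncomputable def sgn {n : ℕ} (s : Finset (Fin n)) (i : Fin n) : ℝ :=
  (-1) ^ (s.filter (· < i)).card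

def eraseIdx {n k : ℕ} (s : Idx n (k+1)) {i : Fin n} (hi : i ∈ s.1) : Idx n k :=
  ⟨s.1.erase i, by simp [Finset.card_erase_of_mem hi, s.2]⟩

def insertIdx {n k : ℕ} (s : Idx n k) {i : Fin n} (hi : i ∉ s.1) : Idx n (k+1) :=
  ⟨insert i s.1, by simp [Finset.card_insert_of_notMem hi, s.2]⟩

/-- The exterior derivative `d^k`. -/
noncomputable def extd (n k : ℕ) : Form n k →ₗ[ℝ] Form n (k+1) where
  toFun ω := fun s => ∑ i ∈ s.1.attach, sgn s.1 i.1 • pderiv i.1 (ω (eraseIdx s i.2))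
  map_add' ω η := by
    funext s
    simp [Finset.sum_add_distrib, smul_add]
  map_smul' c ω := by
    funext s
    simp only [Pi.smul_apply, RingHom.id_apply]
    rw [Finset.smul_sum]
    exact Finset.sum_congr rfl (fun i _ => by rw [(pderiv i.1).map_smul, smul_comm])

/-- The Koszul operator `κ` (contraction with the position vector field). -/
noncomputable def koszul (n k : ℕ) : Form n (k+1) →ₗ[ℝ] Form n k where
  toFun ω := fun s =>
    ∑ i ∈ (s.1ᶜ).attach, sgn s.1 i.1 • (X i.1 * ω (insertIdx s (Finset.mem_compl.mp i.2)))
  map_add' ω η := by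
    funext s
    simp [Finset.sum_add_distrib, mul_add, smul_add]
  map_smul' c ω := by
    funext s
    simp only [Pi.smul_apply, RingHom.id_apply, mul_smul_comm]
    rw [Finset.smul_sum]
    exact Finset.sum_congr rfl (fun i _ => (smul_comm _ _ _))

/-- The codifferential `δ_{k+1}` (the formal adjoint of `d^k` on Euclidean `ℝⁿ`,
which coincides with `(-1)^{(k+1)n} ⋆ d^{n-k-1} ⋆`). -/
noncomputable def codiff (n k : ℕ) : Form n (k+1) →ₗ[ℝ] Form n k where
  toFun ω := fun s =>
    -∑ i ∈ (s.1ᶜ).attach, sgn s.1 i.1 • pderiv i.1 (ω (insertIdx s (Finset.mem_compl.mp i.2)))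
  map_add' ω η := by
    funext s
    simp [Finset.sum_add_distrib, smul_add]
    ring
  map_smul' c ω := by
    funext s
    simp only [Pi.smul_apply, RingHom.id_apply, smul_neg, neg_inj]
    rw [Finset.smul_sum]
    exact Finset.sum_congr rfl (fun i _ => by rw [(pderiv i.1).map_smul, smul_comm])

/-- The operator `κ^δ = ⋆ ∘ κ ∘ ⋆` (exterior multiplication by `Σ xᵢ dxⁱ`, up to sign). -/
noncomputable def kappaDelta (n k : ℕ) : Form n k →ₗ[ℝ] Form n (k+1) where
  toFun ω := fun s => ∑ i ∈ s.1.attach, sgn s.1 i.1 • (X i.1 * ω (eraseIdx s i.2))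
  map_add' ω η := by
    funext s
    simp [Finset.sum_add_distrib, mul_add, smul_add]
  map_smul' c ω := by
    funext s
    simp only [Pi.smul_apply, RingHom.id_apply, mul_smul_comm]
    rw [Finset.smul_sum]
    exact Finset.sum_congr rfl (fun i _ => (smul_comm _ _ _))

/-- Sign of the permutation `(t, tᶜ) ↦ (1,…,n)`, i.e. `⋆ dx^t = starSign t · dx^{tᶜ}`. -/
noncomputable def starSign {n : ℕ} (t : Finset (Fin n)) : ℝ :=
  (-1) ^ (∑ i ∈ t, ((tᶜ).filter (· < i)).card)

/-- The Hodge star operator on `k`-forms on `ℝⁿ`, `k + l = n`. -/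
noncomputable def hodge (n k l : ℕ) (h : k + l = n) : Form n k →ₗ[ℝ] Form n l where
  toFun ω := fun s => starSign (s.1ᶜ) •
    ω ⟨s.1ᶜ, by rw [Finset.card_compl, s.2, Fintype.card_fin]; omega⟩
  map_add' ω η := by funext s; simp [smul_add]
  map_smul' c ω := by funext s; simp only [Pi.smul_apply, RingHom.id_apply]; rw [smul_comm]

/-- The monomial form `x_τ dx^σ`. -/
noncomputable def monForm (n k : ℕ) (τ : Finset (Fin n)) (σ : Idx n k) : Form n k :=
  fun s => if s = σ then ∏ i ∈ τ, X i else 0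

/-- `Q_1^-Λ^k = span{ x_τ dx^σ : |σ| = k, 0 ≤ |τ| ≤ n-k, τ ⊆ σᶜ }`. -/
noncomputable def Qm (n k : ℕ) : Submodule ℝ (Form n k) :=
  Submodule.span ℝ
    {ω | ∃ (τ : Finset (Fin n)) (σ : Idx n k), τ.card ≤ n - k ∧ τ ⊆ (σ.1)ᶜ ∧ ω = monForm n k τ σ}

/-- `Q_1^{*,-}Λ^k = span{ x_τ' dx^σ' : |σ'| = k, 0 ≤ |τ'| ≤ k, τ' ⊆ σ' }`. -/
noncomputable def Qs (n k : ℕ) : Submodule ℝ (Form n k) :=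
  Submodule.span ℝ
    {ω | ∃ (τ : Finset (Fin n)) (σ : Idx n k), τ.card ≤ k ∧ τ ⊆ σ.1 ∧ ω = monForm n k τ σ}

/-- `P_0Λ^k`: forms with constant coefficients. -/
noncomputable def P0 (n k : ℕ) : Submodule ℝ (Form n k) :=
  Submodule.span ℝ {ω | ∃ σ : Idx n k, ω = monForm n k ∅ σ}

/-- The Whitney space `P_1^-Λ^k = P_0Λ^k + κ(P_0Λ^{k+1})`. -/
noncomputable def Pm (n k : ℕ) : Submodule ℝ (Form n k) :=
  P0 n k ⊔ Submodule.map (koszul n k) (P0 n (k+1))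

/-- The star Whitney space `P_1^{*,-}Λ^{k+1} = P_0Λ^{k+1} + κ^δ(P_0Λ^k)`. -/
noncomputable def PsS (n k : ℕ) : Submodule ℝ (Form n (k+1)) :=
  P0 n (k+1) ⊔ Submodule.map (kappaDelta n k) (P0 n k)

/-- `L²` inner product of `k`-forms on the centered box `[-r, r]`. -/
noncomputable def binner (n k : ℕ) (r : Fin n → ℝ) (ω η : Form n k) : ℝ :=
  ∑ s : Idx n k, ∫ x in Set.Icc (fun i => -(r i)) r, eval x (ω s * η s)

/-- `L²` inner product of `k`-forms on the reference cube `T = [-1,1]ⁿ`. -/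
noncomputable def finner (n k : ℕ) (ω η : Form n k) : ℝ :=
  binner n k (fun _ => (1 : ℝ)) ω η

section Aux

open Finset

variable {n k : ℕ}

/-- The square-free monomial `∏_{i ∈ t} xᵢ`. -/
noncomputable def mon (n : ℕ) (t : Finset (Fin n)) : MvPolynomial (Fin n) ℝ :=
  ∏ i ∈ t, X i

lemma monForm_apply (τ : Finset (Fin n)) (σ s : Idx n k) :
    monForm n k τ σ s = if s = σ then mon n τ else 0 := rfl

lemma extd_apply (ν : Form n k) (s : Idx n (k+1)) :
    extd n k ν s = ∑ i ∈ s.1.attach, sgn s.1 i.1 • pderiv i.1 (ν (eraseIdx s i.2)) := rfl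

lemma codiff_apply (μ : Form n (k+1)) (s : Idx n k) :
    codiff n k μ s =
      -∑ i ∈ (s.1ᶜ).attach, sgn s.1 i.1 •
        pderiv i.1 (μ (insertIdx s (Finset.mem_compl.mp i.2))) := rfl

lemma koszul_apply (μ : Form n (k+1)) (s : Idx n k) :
    koszul n k μ s =
      ∑ i ∈ (s.1ᶜ).attach, sgn s.1 i.1 •
        (X i.1 * μ (insertIdx s (Finset.mem_compl.mp i.2))) := rfl

lemma kappaDelta_apply (ν : Form n k) (s : Idx n (k+1)) :
    kappaDelta n k ν s = ∑ i ∈ s.1.attach, sgn s.1 i.1 • (X i.1 * ν (eraseIdx s i.2)) := rfl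

/-- The box `[-1,1]ⁿ`. -/
noncomputable def intBox (n : ℕ) (p : MvPolynomial (Fin n) ℝ) : ℝ :=
  ∫ x in Set.Icc (fun _ => -(1:ℝ)) (fun _ => (1:ℝ)), eval x p

lemma integrableOn_eval (p : MvPolynomial (Fin n) ℝ) :
    IntegrableOn (fun x => eval x p)
      (Set.Icc (fun _ => -(1:ℝ)) (fun _ => (1:ℝ))) (volume : Measure (Fin n → ℝ)) :=
  (MvPolynomial.continuous_eval p).continuousOn.integrableOn_compact isCompact_Icc

lemma intBox_add (p q : MvPolynomial (Fin n) ℝ) :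
    intBox n (p + q) = intBox n p + intBox n q := by
  unfold intBox
  simp only [map_add]
  exact integral_add (integrableOn_eval p) (integrableOn_eval q)

lemma intBox_smul (c : ℝ) (p : MvPolynomial (Fin n) ℝ) :
    intBox n (c • p) = c * intBox n p := by
  unfold intBox
  simp only [MvPolynomial.smul_eval]
  exact integral_const_mul c _

lemma intBox_zero : intBox n (0 : MvPolynomial (Fin n) ℝ) = 0 := by
  unfold intBox; simp

lemma intBox_neg (p : MvPolynomial (Fin n) ℝ) : intBox n (-p) = -intBox n p := by
  have := intBox_smul (-1 : ℝ) p
  simpa using this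

lemma intBox_sum {ι : Type*} (s : Finset ι) (f : ι → MvPolynomial (Fin n) ℝ) :
    intBox n (∑ i ∈ s, f i) = ∑ i ∈ s, intBox n (f i) := by
  induction s using Finset.cons_induction with
  | empty => simpa using intBox_zero
  | cons a s ha ih => rw [Finset.sum_cons, Finset.sum_cons, intBox_add, ih]

lemma eval_mon (x : Fin n → ℝ) (t : Finset (Fin n)) :
    eval x (mon n t) = ∏ j ∈ t, x j := by
  unfold mon
  rw [map_prod]
  simp

/-- The key vanishing lemma: integral over the symmetric box of a monomial
which is odd in the variable `i`. -/
lemma intBox_mon_mul_of_mem {a b : Finset (Fin n)} {i : Fin n}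
    (hia : i ∈ a) (hib : i ∉ b) : intBox n (mon n a * mon n b) = 0 := by
  classical
  set s : Set (Fin n → ℝ) := Set.Icc (fun _ => -(1:ℝ)) (fun _ => (1:ℝ)) with hs
  set f : Fin n → ℝ → ℝ := fun j t => if j = i then -t else t with hf
  set φ : (Fin n → ℝ) → (Fin n → ℝ) := fun x j => f j (x j) with hφdef
  have hfm : ∀ j, MeasurePreserving (f j) (volume : Measure ℝ) volume := by
    intro j
    by_cases h : j = i
    · simpa [hf, h] using Measure.measurePreserving_neg (volume : Measure ℝ)
    · convert MeasurePreserving.id (volume : Measure ℝ) using 1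
      funext t; simp [hf, h]
  have hφ : MeasurePreserving φ (volume : Measure (Fin n → ℝ)) volume := by
    rw [show (volume : Measure (Fin n → ℝ)) = Measure.pi fun _ => volume from rfl]
    exact measurePreserving_pi _ _ hfm
  have hinv : Function.Involutive φ := by
    intro x; funext j
    by_cases h : j = i <;> simp [hφdef, hf, h]
  have hc : Continuous φ := by
    refine continuous_pi fun j => ?_
    have hj : Continuous fun x : Fin n → ℝ => x j := continuous_apply j
    by_cases h : j = i
    · refine hj.neg.congr fun x => ?_
      simp [hφdef, hf, h]
    · simpa [hφdef, hf, h] using hj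
  let e : Homeomorph (Fin n → ℝ) (Fin n → ℝ) :=
    { toEquiv := Function.Involutive.toPerm φ hinv
      continuous_toFun := hc
      continuous_invFun := hc }
  have hemb : MeasurableEmbedding φ := e.toMeasurableEquiv.measurableEmbedding
  have hmem : ∀ y : Fin n → ℝ, y ∈ s ↔ ∀ j, -1 ≤ y j ∧ y j ≤ 1 := by
    intro y
    simp only [hs, Set.mem_Icc, Pi.le_def]
    constructor
    · rintro ⟨h1, h2⟩ j
      exact ⟨h1 j, h2 j⟩
    · intro h
      exact ⟨fun j => (h j).1, fun j => (h j).2⟩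
  have hφval : ∀ (x : Fin n → ℝ) j, φ x j = if j = i then -x j else x j := fun x j => rfl
  have hpre : φ ⁻¹' s = s := by
    ext x
    simp only [Set.mem_preimage]
    rw [hmem, hmem]
    constructor <;> intro h j <;> have hj := h j
    · by_cases hji : j = i
      · rw [hφval, if_pos hji] at hj
        exact ⟨by linarith [hj.2], by linarith [hj.1]⟩
      · rwa [hφval, if_neg hji] at hj
    · by_cases hji : j = i
      · rw [hφval, if_pos hji]
        exact ⟨by linarith [hj.2], by linarith [hj.1]⟩
      · rwa [hφval, if_neg hji]
  have hodd : ∀ x : Fin n → ℝ,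
      eval (φ x) (mon n a * mon n b) = -eval x (mon n a * mon n b) := by
    intro x
    have hφi : φ x i = -x i := by simp [hφdef, hf]
    have hφj : ∀ j, j ≠ i → φ x j = x j := by intro j hj; simp [hφdef, hf, hj]
    rw [map_mul, map_mul, eval_mon, eval_mon, eval_mon, eval_mon]
    have h1 : (∏ j ∈ a, φ x j) = -∏ j ∈ a, x j := by
      rw [← Finset.mul_prod_erase a (fun j => φ x j) hia,
        ← Finset.mul_prod_erase a (fun j => x j) hia, hφi,
        Finset.prod_congr rfl (fun j hj => hφj j (Finset.ne_of_mem_erase hj))]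
      ring
    have h2 : (∏ j ∈ b, φ x j) = ∏ j ∈ b, x j :=
      Finset.prod_congr rfl fun j hj => hφj j (fun h => hib (h ▸ hj))
    rw [h1, h2]; ring
  have key : (∫ x in s, eval x (mon n a * mon n b))
      = -∫ x in s, eval x (mon n a * mon n b) := by
    conv_lhs => rw [← hφ.setIntegral_preimage_emb hemb]
    rw [hpre]
    simp only [hodd]
    rw [integral_neg]
  have hbox : intBox n (mon n a * mon n b) = ∫ x in s, eval x (mon n a * mon n b) := by
    rw [hs]
    rfl
  linarith

lemma intBox_mon_mul_ne {a b : Finset (Fin n)} (h : a ≠ b) :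
    intBox n (mon n a * mon n b) = 0 := by
  have : ¬ (∀ i, i ∈ a ↔ i ∈ b) := fun hall => h (Finset.ext hall)
  push_neg at this
  obtain ⟨i, hi⟩ := this
  rcases hi with ⟨hia, hib⟩ | ⟨hia, hib⟩
  · exact intBox_mon_mul_of_mem hia hib
  · rw [mul_comm]; exact intBox_mon_mul_of_mem hib hia

lemma pderiv_mon (i : Fin n) (t : Finset (Fin n)) :
    pderiv i (mon n t) = if i ∈ t then mon n (t.erase i) else 0 := by
  classical
  induction t using Finset.induction_on with
  | empty => simp [mon, pderiv_one]
  | @insert a t' ha ih =>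
    have hm : mon n (insert a t') = X a * mon n t' := by
      rw [mon, mon, Finset.prod_insert ha]
    rw [hm, pderiv_mul, ih]
    by_cases hia : i = a
    · subst hia
      rw [pderiv_X_self, if_neg ha, if_pos (Finset.mem_insert_self i t'),
        Finset.erase_insert ha]
      ring
    · rw [pderiv_X_of_ne (fun h => hia h.symm)]
      by_cases hit : i ∈ t'
      · rw [if_pos hit, if_pos (Finset.mem_insert_of_mem hit),
          Finset.erase_insert_of_ne (fun h => hia h.symm)]
        have han : a ∉ t'.erase i := fun h => ha (Finset.mem_of_mem_erase h)
        rw [show mon n (insert a (t'.erase i)) = X a * mon n (t'.erase i) by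
          rw [mon, mon, Finset.prod_insert han]]
        ring
      · rw [if_neg hit, if_neg (by simp [hia, hit])]
        ring

lemma sgn_insert_self (t : Finset (Fin n)) (i : Fin n) : sgn (insert i t) i = sgn t i := by
  unfold sgn
  rw [Finset.filter_insert, if_neg (lt_irrefl i)]

lemma sgn_mul_self (t : Finset (Fin n)) (i : Fin n) : sgn t i * sgn t i = 1 := by
  unfold sgn
  rw [← pow_add]
  exact Even.neg_one_pow ⟨_, rfl⟩

lemma exists_sdiff {ρ : Idx n k} {σ : Idx n (k+1)} (h : ρ.1 ⊆ σ.1) :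
    ∃ i₀, i₀ ∈ σ.1 ∧ i₀ ∉ ρ.1 ∧ σ.1.erase i₀ = ρ.1 ∧ insert i₀ ρ.1 = σ.1 ∧
      ∀ j, j ∈ σ.1 → j ∉ ρ.1 → j = i₀ := by
  have hc : (σ.1 \ ρ.1).card = 1 := by
    rw [Finset.card_sdiff_of_subset h, σ.2, ρ.2]; omega
  obtain ⟨i₀, hi⟩ := Finset.card_eq_one.mp hc
  have hmem : i₀ ∈ σ.1 ∧ i₀ ∉ ρ.1 :=
    Finset.mem_sdiff.mp (by rw [hi]; exact Finset.mem_singleton_self i₀)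
  have huniq : ∀ j, j ∈ σ.1 → j ∉ ρ.1 → j = i₀ := by
    intro j hj hj'
    have : j ∈ σ.1 \ ρ.1 := Finset.mem_sdiff.mpr ⟨hj, hj'⟩
    rw [hi] at this
    exact Finset.mem_singleton.mp this
  have her : σ.1.erase i₀ = ρ.1 := by
    refine (Finset.eq_of_subset_of_card_le ?_ ?_).symm
    · intro j hj
      exact Finset.mem_erase.mpr ⟨fun hji => hmem.2 (hji ▸ hj), h hj⟩
    · rw [Finset.card_erase_of_mem hmem.1, σ.2, ρ.2]
      omega
  refine ⟨i₀, hmem.1, hmem.2, her, ?_, huniq⟩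
  rw [← her]
  exact Finset.insert_erase hmem.1

end Aux

section Aux2

open Finset

variable {n k : ℕ}

lemma finner_eq (ω η : Form n k) : finner n k ω η = ∑ s : Idx n k, intBox n (ω s * η s) := rfl

lemma finner_monForm_right (ω : Form n k) (τ : Finset (Fin n)) (σ : Idx n k) :
    finner n k ω (monForm n k τ σ) = intBox n (ω σ * mon n τ) := by
  rw [finner_eq, Finset.sum_eq_single σ]
  · rw [monForm_apply, if_pos rfl]
  · intro b _ hb
    rw [monForm_apply, if_neg hb, mul_zero, intBox_zero]
  · exact fun h => absurd (Finset.mem_univ σ) h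

lemma finner_monForm_left (η : Form n k) (τ : Finset (Fin n)) (ρ : Idx n k) :
    finner n k (monForm n k τ ρ) η = intBox n (mon n τ * η ρ) := by
  rw [finner_eq, Finset.sum_eq_single ρ]
  · rw [monForm_apply, if_pos rfl]
  · intro b _ hb
    rw [monForm_apply, if_neg hb, zero_mul, intBox_zero]
  · exact fun h => absurd (Finset.mem_univ ρ) h

lemma finner_add_left (ω ω' η : Form n k) :
    finner n k (ω + ω') η = finner n k ω η + finner n k ω' η := by
  rw [finner_eq, finner_eq, finner_eq, ← Finset.sum_add_distrib]
  refine Finset.sum_congr rfl fun s _ => ?_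
  rw [Pi.add_apply, add_mul, intBox_add]

lemma finner_smul_left (c : ℝ) (ω η : Form n k) :
    finner n k (c • ω) η = c * finner n k ω η := by
  rw [finner_eq, finner_eq, Finset.mul_sum]
  refine Finset.sum_congr rfl fun s _ => ?_
  rw [Pi.smul_apply, smul_mul_assoc, intBox_smul]

lemma finner_zero_left (η : Form n k) : finner n k 0 η = 0 := by
  rw [finner_eq]
  refine Finset.sum_eq_zero fun s _ => ?_
  rw [Pi.zero_apply, zero_mul, intBox_zero]

lemma finner_add_right (ω η η' : Form n k) :
    finner n k ω (η + η') = finner n k ω η + finner n k ω η' := by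
  rw [finner_eq, finner_eq, finner_eq, ← Finset.sum_add_distrib]
  refine Finset.sum_congr rfl fun s _ => ?_
  rw [Pi.add_apply, mul_add, intBox_add]

lemma finner_smul_right (c : ℝ) (ω η : Form n k) :
    finner n k ω (c • η) = c * finner n k ω η := by
  rw [finner_eq, finner_eq, Finset.mul_sum]
  refine Finset.sum_congr rfl fun s _ => ?_
  rw [Pi.smul_apply, mul_smul_comm, intBox_smul]

lemma finner_zero_right (ω : Form n k) : finner n k ω 0 = 0 := by
  rw [finner_eq]
  refine Finset.sum_eq_zero fun s _ => ?_
  rw [Pi.zero_apply, mul_zero, intBox_zero]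

/-- The bilinear pairing appearing in the adjoint identity. -/
noncomputable def Bf (n k : ℕ) (ν : Form n k) (μ : Form n (k+1)) : ℝ :=
  finner n (k+1) (extd n k ν) μ - finner n k ν (codiff n k μ)

lemma Bf_add_left (ν ν' : Form n k) (μ : Form n (k+1)) :
    Bf n k (ν + ν') μ = Bf n k ν μ + Bf n k ν' μ := by
  unfold Bf
  rw [map_add, finner_add_left, finner_add_left]
  ring

lemma Bf_smul_left (c : ℝ) (ν : Form n k) (μ : Form n (k+1)) :
    Bf n k (c • ν) μ = c * Bf n k ν μ := by
  unfold Bf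
  rw [LinearMap.map_smul, finner_smul_left, finner_smul_left]
  ring

lemma Bf_zero_left (μ : Form n (k+1)) : Bf n k 0 μ = 0 := by
  unfold Bf
  rw [map_zero, finner_zero_left, finner_zero_left]
  ring

lemma Bf_add_right (ν : Form n k) (μ μ' : Form n (k+1)) :
    Bf n k ν (μ + μ') = Bf n k ν μ + Bf n k ν μ' := by
  unfold Bf
  rw [map_add, finner_add_right, finner_add_right]
  ring

lemma Bf_smul_right (c : ℝ) (ν : Form n k) (μ : Form n (k+1)) :
    Bf n k ν (c • μ) = c * Bf n k ν μ := by
  unfold Bf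
  rw [LinearMap.map_smul, finner_smul_right, finner_smul_right]
  ring

lemma Bf_zero_right (ν : Form n k) : Bf n k ν 0 = 0 := by
  unfold Bf
  rw [map_zero, finner_zero_right, finner_zero_right]
  ring

lemma Bf_sum_right {ι : Type*} (ν : Form n k) (s : Finset ι) (f : ι → Form n (k+1)) :
    Bf n k ν (∑ i ∈ s, f i) = ∑ i ∈ s, Bf n k ν (f i) := by
  induction s using Finset.cons_induction with
  | empty => simpa using Bf_zero_right ν
  | cons a s ha ih => rw [Finset.sum_cons, Finset.sum_cons, Bf_add_right, ih]

lemma Bf_gen_A (τ' : Finset (Fin n)) (ρ : Idx n k) (τ : Finset (Fin n)) (σ : Idx n (k+1)) :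
    finner n (k+1) (extd n k (monForm n k τ' ρ)) (monForm n (k+1) τ σ)
      = ∑ i ∈ σ.1.attach,
          sgn σ.1 i.1 * intBox n
            (pderiv i.1 (if eraseIdx σ i.2 = ρ then mon n τ' else 0) * mon n τ) := by
  rw [finner_monForm_right, extd_apply, Finset.sum_mul, intBox_sum]
  refine Finset.sum_congr rfl fun i _ => ?_
  rw [smul_mul_assoc, intBox_smul, monForm_apply]

lemma Bf_gen_B (τ' : Finset (Fin n)) (ρ : Idx n k) (τ : Finset (Fin n)) (σ : Idx n (k+1)) :
    finner n k (monForm n k τ' ρ) (codiff n k (monForm n (k+1) τ σ))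
      = -∑ i ∈ (ρ.1ᶜ).attach,
          sgn ρ.1 i.1 * intBox n
            (mon n τ' * pderiv i.1
              (if insertIdx ρ (Finset.mem_compl.mp i.2) = σ then mon n τ else 0)) := by
  rw [finner_monForm_left, codiff_apply, mul_neg, intBox_neg, Finset.mul_sum, intBox_sum]
  congr 1
  refine Finset.sum_congr rfl fun i _ => ?_
  rw [mul_smul_comm, intBox_smul, monForm_apply]

lemma Bf_gen_of_not (τ' : Finset (Fin n)) (ρ : Idx n k) (τ : Finset (Fin n)) (σ : Idx n (k+1))
    (h : ¬ ρ.1 ⊆ σ.1) :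
    Bf n k (monForm n k τ' ρ) (monForm n (k+1) τ σ) = 0 := by
  unfold Bf
  rw [Bf_gen_A, Bf_gen_B]
  rw [Finset.sum_eq_zero, Finset.sum_eq_zero]
  · ring
  · intro i _
    rw [if_neg, map_zero, mul_zero, intBox_zero, mul_zero]
    intro heq
    apply h
    rw [← (Subtype.ext_iff.mp heq : insert i.1 ρ.1 = σ.1)]
    exact Finset.subset_insert _ _
  · intro i _
    rw [if_neg, map_zero, zero_mul, intBox_zero, mul_zero]
    intro heq
    apply h
    rw [← (Subtype.ext_iff.mp heq : σ.1.erase i.1 = ρ.1)]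
    exact Finset.erase_subset _ _

lemma Bf_gen_of (τ' : Finset (Fin n)) (ρ : Idx n k) (τ : Finset (Fin n)) (σ : Idx n (k+1))
    (i₀ : Fin n) (hi₀σ : i₀ ∈ σ.1) (hi₀ρ : i₀ ∉ ρ.1) (her : σ.1.erase i₀ = ρ.1)
    (hins : insert i₀ ρ.1 = σ.1) (huniq : ∀ j, j ∈ σ.1 → j ∉ ρ.1 → j = i₀) :
    Bf n k (monForm n k τ' ρ) (monForm n (k+1) τ σ)
      = sgn σ.1 i₀ * (intBox n (pderiv i₀ (mon n τ') * mon n τ)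
          + intBox n (mon n τ' * pderiv i₀ (mon n τ))) := by
  unfold Bf
  rw [Bf_gen_A, Bf_gen_B]
  rw [Finset.sum_eq_single (⟨i₀, hi₀σ⟩ : {x // x ∈ σ.1})]
  rotate_left
  · intro b _ hb
    have hbne : i₀ ≠ b.1 := fun hcontra => hb (Subtype.ext hcontra.symm)
    rw [if_neg, map_zero, zero_mul, intBox_zero, mul_zero]
    intro heq
    apply hi₀ρ
    rw [← (Subtype.ext_iff.mp heq : σ.1.erase b.1 = ρ.1)]
    exact Finset.mem_erase.mpr ⟨hbne, hi₀σ⟩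
  · exact fun h => absurd (Finset.mem_attach _ _) h
  rw [Finset.sum_eq_single (⟨i₀, Finset.mem_compl.mpr hi₀ρ⟩ : {x // x ∈ ρ.1ᶜ})]
  rotate_left
  · intro b _ hb
    have hbne : b.1 ≠ i₀ := fun hcontra => hb (Subtype.ext hcontra)
    rw [if_neg, map_zero, mul_zero, intBox_zero, mul_zero]
    intro heq
    have hb1 : b.1 ∈ σ.1 := by
      rw [← (Subtype.ext_iff.mp heq : insert b.1 ρ.1 = σ.1)]
      exact Finset.mem_insert_self _ _
    exact hbne (huniq b.1 hb1 (Finset.mem_compl.mp b.2))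
  · exact fun h => absurd (Finset.mem_attach _ _) h
  rw [if_pos (Subtype.ext her), if_pos (Subtype.ext hins)]
  have hsgn : sgn ρ.1 i₀ = sgn σ.1 i₀ := by
    rw [← hins, sgn_insert_self]
  rw [hsgn]
  ring

end Aux2

section Aux3

open Finset

variable {n k : ℕ}

lemma Bf_gen_two (τ' : Finset (Fin n)) (ρ : Idx n k) (hτ' : τ' ⊆ ρ.1ᶜ)
    (τ : Finset (Fin n)) (σ : Idx n (k+1)) (hτσ : τ ⊆ σ.1) (h2 : 2 ≤ τ.card) :
    Bf n k (monForm n k τ' ρ) (monForm n (k+1) τ σ) = 0 := by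
  by_cases h : ρ.1 ⊆ σ.1
  · obtain ⟨i₀, hi₀σ, hi₀ρ, her, hins, huniq⟩ := exists_sdiff h
    obtain ⟨j, hjτ, hji⟩ := Finset.exists_mem_ne (by omega : 1 < τ.card) i₀
    have hkey : j ∉ τ' := fun hj =>
      hji (huniq j (hτσ hjτ) (Finset.mem_compl.mp (hτ' hj)))
    rw [Bf_gen_of τ' ρ τ σ i₀ hi₀σ hi₀ρ her hins huniq, pderiv_mon, pderiv_mon]
    have h1 : intBox n ((if i₀ ∈ τ' then mon n (τ'.erase i₀) else 0) * mon n τ) = 0 := by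
      by_cases hi₀τ' : i₀ ∈ τ'
      · rw [if_pos hi₀τ']
        refine intBox_mon_mul_ne fun heq => hkey ?_
        rw [← heq] at hjτ
        exact Finset.mem_of_mem_erase hjτ
      · rw [if_neg hi₀τ', zero_mul, intBox_zero]
    have h2' : intBox n (mon n τ' * (if i₀ ∈ τ then mon n (τ.erase i₀) else 0)) = 0 := by
      by_cases hi₀τ : i₀ ∈ τ
      · rw [if_pos hi₀τ]
        refine intBox_mon_mul_ne fun heq => hkey ?_
        rw [heq]
        exact Finset.mem_erase.mpr ⟨hji, hjτ⟩
      · rw [if_neg hi₀τ, mul_zero, intBox_zero]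
    rw [h1, h2']
    ring
  · exact Bf_gen_of_not τ' ρ τ σ h

lemma Bf_gen_one (τ' : Finset (Fin n)) (ρ : Idx n k) (hτ' : τ' ⊆ ρ.1ᶜ)
    (σ : Idx n (k+1)) (m : Fin n) (hm : m ∈ σ.1) :
    Bf n k (monForm n k τ' ρ) (monForm n (k+1) {m} σ)
      = if τ' = ∅ ∧ ρ.1 = σ.1.erase m then sgn σ.1 m * intBox n 1 else 0 := by
  by_cases h : ρ.1 ⊆ σ.1
  · obtain ⟨i₀, hi₀σ, hi₀ρ, her, hins, huniq⟩ := exists_sdiff h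
    rw [Bf_gen_of τ' ρ {m} σ i₀ hi₀σ hi₀ρ her hins huniq, pderiv_mon, pderiv_mon]
    have h1 : intBox n ((if i₀ ∈ τ' then mon n (τ'.erase i₀) else 0) * mon n {m}) = 0 := by
      by_cases hi₀τ' : i₀ ∈ τ'
      · rw [if_pos hi₀τ']
        refine intBox_mon_mul_ne fun heq => ?_
        have hmτ'e : m ∈ τ'.erase i₀ := by
          rw [heq]; exact Finset.mem_singleton_self m
        have hmτ' : m ∈ τ' := Finset.mem_of_mem_erase hmτ'e
        exact (Finset.mem_erase.mp hmτ'e).1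
          (huniq m hm (Finset.mem_compl.mp (hτ' hmτ')))
      · rw [if_neg hi₀τ', zero_mul, intBox_zero]
    rw [h1]
    by_cases him : i₀ ∈ ({m} : Finset (Fin n))
    · have him' : i₀ = m := Finset.mem_singleton.mp him
      subst him'
      rw [if_pos him, show ({i₀} : Finset (Fin n)).erase i₀ = ∅ by simp]
      by_cases hτ'e : τ' = ∅
      · subst hτ'e
        rw [if_pos ⟨rfl, her.symm⟩,
          show mon n (∅ : Finset (Fin n)) * mon n (∅ : Finset (Fin n)) = 1 by simp [mon]]
        ring
      · rw [if_neg (fun hc => hτ'e hc.1), intBox_mon_mul_ne hτ'e]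
        ring
    · rw [if_neg him, mul_zero, intBox_zero, if_neg]
      · ring
      · rintro ⟨-, hceq⟩
        apply him
        rw [Finset.mem_singleton]
        have hmρ : m ∉ ρ.1 := by rw [hceq]; exact Finset.notMem_erase m σ.1
        exact (huniq m hm hmρ).symm
  · rw [Bf_gen_of_not τ' ρ {m} σ h, if_neg]
    rintro ⟨-, hceq⟩
    exact h (by rw [hceq]; exact Finset.erase_subset _ _)

lemma kappaDelta_mon (ρ₀ : Idx n k) :
    kappaDelta n k (monForm n k ∅ ρ₀)
      = ∑ i ∈ (ρ₀.1ᶜ).attach,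
          sgn (insert i.1 ρ₀.1) i.1 •
            monForm n (k+1) {i.1} (insertIdx ρ₀ (Finset.mem_compl.mp i.2)) := by
  funext s
  rw [kappaDelta_apply]
  simp only [Finset.sum_apply, Pi.smul_apply, monForm_apply]
  by_cases h : ρ₀.1 ⊆ s.1
  · obtain ⟨i₀, hi₀s, hi₀ρ, her, hins, huniq⟩ := exists_sdiff h
    rw [Finset.sum_eq_single (⟨i₀, hi₀s⟩ : {x // x ∈ s.1})]
    rotate_left
    · intro b _ hb
      have hbne : i₀ ≠ b.1 := fun hc => hb (Subtype.ext hc.symm)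
      rw [if_neg, mul_zero, smul_zero]
      intro heq
      apply hi₀ρ
      rw [← (Subtype.ext_iff.mp heq : s.1.erase b.1 = ρ₀.1)]
      exact Finset.mem_erase.mpr ⟨hbne, hi₀s⟩
    · exact fun hc => absurd (Finset.mem_attach _ _) hc
    rw [Finset.sum_eq_single (⟨i₀, Finset.mem_compl.mpr hi₀ρ⟩ : {x // x ∈ ρ₀.1ᶜ})]
    rotate_left
    · intro b _ hb
      have hbne : b.1 ≠ i₀ := fun hc => hb (Subtype.ext hc)
      rw [if_neg, smul_zero]
      intro heq
      have hb1 : b.1 ∈ s.1 := by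
        rw [(Subtype.ext_iff.mp heq : s.1 = insert b.1 ρ₀.1)]
        exact Finset.mem_insert_self _ _
      exact hbne (huniq b.1 hb1 (Finset.mem_compl.mp b.2))
    · exact fun hc => absurd (Finset.mem_attach _ _) hc
    have hsg : sgn (insert i₀ ρ₀.1) i₀ = sgn s.1 i₀ := by rw [hins]
    rw [if_pos (Subtype.ext her), if_pos (Subtype.ext hins.symm), hsg]
    simp [mon]
  · have hL : (∑ i ∈ s.1.attach,
        sgn s.1 i.1 • (X i.1 * if eraseIdx s i.2 = ρ₀ then mon n ∅ else 0)) = 0 := by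
      refine Finset.sum_eq_zero fun i _ => ?_
      rw [if_neg, mul_zero, smul_zero]
      intro heq
      apply h
      rw [← (Subtype.ext_iff.mp heq : s.1.erase i.1 = ρ₀.1)]
      exact Finset.erase_subset _ _
    have hR : (∑ i ∈ (ρ₀.1ᶜ).attach,
        sgn (insert i.1 ρ₀.1) i.1 •
          (if s = insertIdx ρ₀ (Finset.mem_compl.mp i.2) then mon n {i.1} else 0)) = 0 := by
      refine Finset.sum_eq_zero fun i _ => ?_
      rw [if_neg, smul_zero]
      intro heq
      apply h
      rw [(Subtype.ext_iff.mp heq : s.1 = insert i.1 ρ₀.1)]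
      exact Finset.subset_insert _ _
    rw [hL, hR]

lemma koszul_mon (σ' : Idx n (k+1)) :
    koszul n k (monForm n (k+1) ∅ σ')
      = ∑ i ∈ σ'.1.attach,
          sgn (σ'.1.erase i.1) i.1 • monForm n k {i.1} (eraseIdx σ' i.2) := by
  funext s
  rw [koszul_apply]
  simp only [Finset.sum_apply, Pi.smul_apply, monForm_apply]
  by_cases h : s.1 ⊆ σ'.1
  · obtain ⟨i₀, hi₀σ, hi₀s, her, hins, huniq⟩ := exists_sdiff h
    rw [Finset.sum_eq_single (⟨i₀, Finset.mem_compl.mpr hi₀s⟩ : {x // x ∈ s.1ᶜ})]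
    rotate_left
    · intro b _ hb
      have hbne : b.1 ≠ i₀ := fun hc => hb (Subtype.ext hc)
      rw [if_neg, mul_zero, smul_zero]
      intro heq
      have hb1 : b.1 ∈ σ'.1 := by
        rw [← (Subtype.ext_iff.mp heq : insert b.1 s.1 = σ'.1)]
        exact Finset.mem_insert_self _ _
      exact hbne (huniq b.1 hb1 (Finset.mem_compl.mp b.2))
    · exact fun hc => absurd (Finset.mem_attach _ _) hc
    rw [Finset.sum_eq_single (⟨i₀, hi₀σ⟩ : {x // x ∈ σ'.1})]
    rotate_left
    · intro b _ hb
      have hbne : i₀ ≠ b.1 := fun hc => hb (Subtype.ext hc.symm)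
      rw [if_neg, smul_zero]
      intro heq
      apply hi₀s
      rw [(Subtype.ext_iff.mp heq : s.1 = σ'.1.erase b.1)]
      exact Finset.mem_erase.mpr ⟨hbne, hi₀σ⟩
    · exact fun hc => absurd (Finset.mem_attach _ _) hc
    have hsg : sgn (σ'.1.erase i₀) i₀ = sgn s.1 i₀ := by rw [her]
    rw [if_pos (Subtype.ext hins), if_pos (Subtype.ext her.symm), hsg]
    simp [mon]
  · have hL : (∑ i ∈ (s.1ᶜ).attach,
        sgn s.1 i.1 •
          (X i.1 * if insertIdx s (Finset.mem_compl.mp i.2) = σ' then mon n ∅ else 0)) = 0 := by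
      refine Finset.sum_eq_zero fun i _ => ?_
      rw [if_neg, mul_zero, smul_zero]
      intro heq
      apply h
      rw [← (Subtype.ext_iff.mp heq : insert i.1 s.1 = σ'.1)]
      exact Finset.subset_insert _ _
    have hR : (∑ i ∈ σ'.1.attach,
        sgn (σ'.1.erase i.1) i.1 • (if s = eraseIdx σ' i.2 then mon n {i.1} else 0)) = 0 := by
      refine Finset.sum_eq_zero fun i _ => ?_
      rw [if_neg, smul_zero]
      intro heq
      apply h
      rw [(Subtype.ext_iff.mp heq : s.1 = σ'.1.erase i.1)]
      exact Finset.erase_subset _ _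
    rw [hL, hR]

end Aux3

section Aux4

open Finset

variable {n k : ℕ}

lemma Bf_kdelta (τ' : Finset (Fin n)) (ρ : Idx n k) (hτ' : τ' ⊆ ρ.1ᶜ) (ρ₀ : Idx n k) :
    Bf n k (monForm n k τ' ρ) (kappaDelta n k (monForm n k ∅ ρ₀))
      = ((n - k : ℕ) : ℝ) * (if τ' = ∅ ∧ ρ.1 = ρ₀.1 then intBox n 1 else 0) := by
  rw [kappaDelta_mon, Bf_sum_right]
  have hterm : ∀ i : {x // x ∈ ρ₀.1ᶜ},
      Bf n k (monForm n k τ' ρ)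
        (sgn (insert i.1 ρ₀.1) i.1 •
          monForm n (k+1) {i.1} (insertIdx ρ₀ (Finset.mem_compl.mp i.2)))
      = if τ' = ∅ ∧ ρ.1 = ρ₀.1 then intBox n 1 else 0 := by
    intro i
    rw [Bf_smul_right, Bf_gen_one τ' ρ hτ' _ i.1 (Finset.mem_insert_self _ _)]
    have h1 : (insertIdx ρ₀ (Finset.mem_compl.mp i.2)).1 = insert i.1 ρ₀.1 := rfl
    simp only [h1, Finset.erase_insert (Finset.mem_compl.mp i.2)]
    by_cases hC : τ' = ∅ ∧ ρ.1 = ρ₀.1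
    · rw [if_pos hC, if_pos hC, ← mul_assoc, sgn_mul_self, one_mul]
    · rw [if_neg hC, if_neg hC, mul_zero]
  rw [Finset.sum_congr rfl (fun i _ => hterm i), Finset.sum_const, Finset.card_attach,
    Finset.card_compl, ρ₀.2, Fintype.card_fin, nsmul_eq_mul]

lemma Bf_two_span (τ : Finset (Fin n)) (σ : Idx n (k+1)) (hτσ : τ ⊆ σ.1) (h2 : 2 ≤ τ.card)
    {ν : Form n k} (hν : ν ∈ Qm n k) : Bf n k ν (monForm n (k+1) τ σ) = 0 := by
  unfold Qm at hν
  induction hν using Submodule.span_induction with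
  | mem x hx =>
    obtain ⟨τ', ρ, -, hsub, rfl⟩ := hx
    exact Bf_gen_two τ' ρ hsub τ σ hτσ h2
  | zero => exact Bf_zero_left _
  | add x y hx hy ihx ihy => rw [Bf_add_left, ihx, ihy, add_zero]
  | smul a x hx ih => rw [Bf_smul_left, ih, mul_zero]

lemma Bf_one_span (σ : Idx n (k+1)) (m : Fin n) (hm : m ∈ σ.1)
    {ν : Form n k} (hν : ν ∈ Qm n k) :
    ((n - k : ℕ) : ℝ) * Bf n k ν (monForm n (k+1) {m} σ)
      = sgn σ.1 m * Bf n k ν (kappaDelta n k (monForm n k ∅ (eraseIdx σ hm))) := by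
  unfold Qm at hν
  induction hν using Submodule.span_induction with
  | mem x hx =>
    obtain ⟨τ', ρ, -, hsub, rfl⟩ := hx
    rw [Bf_gen_one τ' ρ hsub σ m hm, Bf_kdelta τ' ρ hsub (eraseIdx σ hm)]
    have he : (eraseIdx σ hm).1 = σ.1.erase m := rfl
    simp only [he]
    by_cases hC : τ' = ∅ ∧ ρ.1 = σ.1.erase m
    · rw [if_pos hC, if_pos hC]; ring
    · rw [if_neg hC, if_neg hC]; ring
  | zero => rw [Bf_zero_left, Bf_zero_left]; ring
  | add x y hx hy ihx ihy =>
    rw [Bf_add_left, Bf_add_left, mul_add, mul_add, ihx, ihy]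
  | smul a x hx ih =>
    rw [Bf_smul_left, Bf_smul_left]
    linear_combination a * ih

lemma Pm_le_Qm (hk : k + 1 ≤ n) : Pm n k ≤ Qm n k := by
  apply sup_le
  · apply Submodule.span_le.mpr
    rintro x ⟨σ, rfl⟩
    exact Submodule.subset_span ⟨∅, σ, by simp, Finset.empty_subset _, rfl⟩
  · rw [Submodule.map_le_iff_le_comap]
    apply Submodule.span_le.mpr
    rintro x ⟨σ', rfl⟩
    show koszul n k (monForm n (k+1) ∅ σ') ∈ Qm n k
    rw [koszul_mon]
    refine Submodule.sum_mem _ fun i _ => Submodule.smul_mem _ _ ?_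
    refine Submodule.subset_span ⟨{i.1}, eraseIdx σ' i.2, ?_, ?_, rfl⟩
    · rw [Finset.card_singleton]; omega
    · intro j hj
      rw [Finset.mem_singleton] at hj
      subst hj
      exact Finset.mem_compl.mpr (Finset.notMem_erase _ _)

end Aux4

/-- Lemma 3.5, `eq:ap=int`. For `ω ∈ Q_1^-Λ^k` on `T = [-1,1]ⁿ`, the defining
adjoint identity of the projection `I_T^{d^k}` (tested against `P_1^{*,-}Λ^{k+1}`) extends to all
test forms `μ` in the larger space `Q_1^{*,-}Λ^{k+1}`. -/
theorem stmt13 (n k : ℕ) (hk : k + 1 ≤ n)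
    (I : Form n k → Form n k)
    (hI : ∀ ω : Form n k, I ω ∈ Pm n k ∧ ∀ μ ∈ PsS n k,
      finner n (k+1) (extd n k (I ω)) μ - finner n k (I ω) (codiff n k μ)
        = finner n (k+1) (extd n k ω) μ - finner n k ω (codiff n k μ))
    (ω : Form n k) (hω : ω ∈ Qm n k) :
    ∀ μ ∈ Qs n (k+1),
      finner n (k+1) (extd n k (I ω)) μ - finner n k (I ω) (codiff n k μ)
        = finner n (k+1) (extd n k ω) μ - finner n k ω (codiff n k μ) := by
  intro μ hμ
  have hIQ : I ω ∈ Qm n k := Pm_le_Qm hk (hI ω).1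
  have key : Bf n k (I ω) μ = Bf n k ω μ := by
    unfold Qs at hμ
    induction hμ using Submodule.span_induction with
    | mem x hx =>
      obtain ⟨τ, σ, hcard, hsub, rfl⟩ := hx
      by_cases h0 : τ = ∅
      · subst h0
        exact (hI ω).2 _ (Submodule.mem_sup_left (Submodule.subset_span ⟨σ, rfl⟩))
      · by_cases h1 : τ.card = 1
        · obtain ⟨m, rfl⟩ := Finset.card_eq_one.mp h1
          have hm : m ∈ σ.1 := hsub (Finset.mem_singleton_self m)
          have e1 := Bf_one_span σ m hm hIQ
          have e2 := Bf_one_span σ m hm hω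
          have e3 : Bf n k (I ω) (kappaDelta n k (monForm n k ∅ (eraseIdx σ hm)))
              = Bf n k ω (kappaDelta n k (monForm n k ∅ (eraseIdx σ hm))) :=
            (hI ω).2 _ (Submodule.mem_sup_right
              (Submodule.mem_map_of_mem (Submodule.subset_span ⟨eraseIdx σ hm, rfl⟩)))
          have hnk : ((n - k : ℕ) : ℝ) ≠ 0 := Nat.cast_ne_zero.mpr (by omega)
          exact mul_left_cancel₀ hnk (by rw [e1, e3, ← e2])
        · have h2 : 2 ≤ τ.card := by
            have : τ.card ≠ 0 := fun hc => h0 (Finset.card_eq_zero.mp hc)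
            omega
          rw [Bf_two_span τ σ hsub h2 hIQ, Bf_two_span τ σ hsub h2 hω]
    | zero => rw [Bf_zero_right, Bf_zero_right]
    | add x y hx hy ihx ihy => rw [Bf_add_right, Bf_add_right, ihx, ihy]
    | smul a x hx ih => rw [Bf_smul_right, Bf_smul_right, ih]
  exact key
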